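/- Let α > 1 and consider the planar ODE system c'(t) = (α-1) - (α+1)c(t)², d'(t) = (α+1) - (α-1)d(t)² with initial values c(0) = 1, d(0) = 1. Then the solution exists for all t ≥ 0, c(t) stays in the interval [√((α-1)/(α+1)), 1], d(t) stays in [1, √((α+1)/(α-1))], and c(t) → √((α-1)/(α+1)) and d(t) → √((α+1)/(α-1)) as t → ∞. -/

import Mathlib

open Real Filter

/-- For `α > 1`, the normalized `(RH)_α` flow ODE system on `S² × L`,
`c' = (α-1) - (α+1)c²`, `d' = (α+1) - (α-1)d²`, `c 0 = d 0 = 1`, has a solution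
for all `t ≥ 0`, with `c` trapped in `[√((α-1)/(α+1)), 1]`, `d` trapped in
`[1, √((α+1)/(α-1))]`, and `c(t) → √((α-1)/(α+1))`, `d(t) → √((α+1)/(α-1))` as `t → ∞`. -/
theorem stmt_1 (α : ℝ) (hα : 1 < α) :
    ∃ c d : ℝ → ℝ,
      c 0 = 1 ∧ d 0 = 1 ∧
      (∀ t : ℝ, 0 ≤ t → HasDerivAt c ((α - 1) - (α + 1) * (c t) ^ 2) t) ∧
      (∀ t : ℝ, 0 ≤ t → HasDerivAt d ((α + 1) - (α - 1) * (d t) ^ 2) t) ∧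
      (∀ t : ℝ, 0 ≤ t → c t ∈ Set.Icc (Real.sqrt ((α - 1) / (α + 1))) 1) ∧
      (∀ t : ℝ, 0 ≤ t → d t ∈ Set.Icc 1 (Real.sqrt ((α + 1) / (α - 1)))) ∧
      Tendsto c atTop (nhds (Real.sqrt ((α - 1) / (α + 1)))) ∧
      Tendsto d atTop (nhds (Real.sqrt ((α + 1) / (α - 1)))) := by
  have hm : (0:ℝ) < α - 1 := by linarith
  have hp : (0:ℝ) < α + 1 := by linarith
  set a : ℝ := Real.sqrt ((α - 1) / (α + 1)) with ha_def
  have ha2 : a ^ 2 = (α - 1) / (α + 1) := Real.sq_sqrt (le_of_lt (div_pos hm hp))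
  have ha0 : 0 < a := Real.sqrt_pos.2 (div_pos hm hp)
  have ha1 : a < 1 := by
    have h2 : a ^ 2 < 1 := by rw [ha2, div_lt_one hp]; linarith
    nlinarith
  have hak : a ^ 2 * (α + 1) = α - 1 := by
    rw [ha2]; field_simp
  set k : ℝ := a * (α + 1) with hk_def
  have hk0 : 0 < k := mul_pos ha0 hp
  set r : ℝ := (1 - a) / (1 + a) with hr_def
  have hr0 : 0 < r := div_pos (by linarith) (by linarith)
  have hr1 : r < 1 := by rw [hr_def, div_lt_one (by linarith)]; linarith
  set E : ℝ → ℝ := fun t => r * Real.exp (-(2 * k) * t) with hE_def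
  have hE0 : ∀ t, 0 < E t := fun t => mul_pos hr0 (Real.exp_pos _)
  have hEr : ∀ t : ℝ, 0 ≤ t → E t ≤ r := by
    intro t ht
    have h1 : Real.exp (-(2 * k) * t) ≤ 1 := Real.exp_le_one_iff.2 (by nlinarith)
    calc E t ≤ r * 1 := mul_le_mul_of_nonneg_left h1 (le_of_lt hr0)
      _ = r := mul_one r
  have hE1 : ∀ t : ℝ, 0 ≤ t → E t < 1 := fun t ht => lt_of_le_of_lt (hEr t ht) hr1
  have hEd : ∀ t, HasDerivAt E (-(2 * k) * E t) t := by
    intro t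
    have h1 : HasDerivAt (fun t : ℝ => -(2 * k) * t) (-(2 * k)) t := by
      simpa using (hasDerivAt_id t).const_mul (-(2 * k))
    have h2 := (h1.exp).const_mul r
    refine h2.congr_deriv ?_
    simp only [hE_def]; ring
  have hEzero : E 0 = r := by simp [hE_def]
  have hb : Real.sqrt ((α + 1) / (α - 1)) = 1 / a := by
    rw [ha_def, one_div, ← Real.sqrt_inv]
    congr 1
    rw [inv_div]
  have hElim : Tendsto E atTop (nhds 0) := by
    have h1 : Tendsto (fun t : ℝ => -(2 * k) * t) atTop atBot :=
      tendsto_id.const_mul_atTop_of_neg (by linarith) |>.congr (fun t => rfl)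
    have h2 := Real.tendsto_exp_atBot.comp h1
    have h3 := h2.const_mul r
    simpa [hE_def, Function.comp, mul_zero] using h3
  -- the solutions
  refine ⟨fun t => a * (1 + E t) / (1 - E t), fun t => (1 / a) * (1 - E t) / (1 + E t),
    ?_, ?_, ?_, ?_, ?_, ?_, ?_, ?_⟩
  · show a * (1 + E 0) / (1 - E 0) = 1
    rw [hEzero, hr_def]
    have h1a : (1:ℝ) + a ≠ 0 := by positivity
    field_simp
    ring
    exact mul_inv_cancel₀ (ne_of_gt ha0)
  · show (1 / a) * (1 - E 0) / (1 + E 0) = 1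
    rw [hEzero, hr_def]
    have h1a : (1:ℝ) + a ≠ 0 := by positivity
    have ha0' : a ≠ 0 := ne_of_gt ha0
    field_simp
    ring
  · intro t ht
    have hne : 1 - E t ≠ 0 := ne_of_gt (by linarith [hE1 t ht])
    have hd : HasDerivAt (fun t => a * (1 + E t) / (1 - E t))
        (((a * (-(2 * k) * E t)) * (1 - E t) - (a * (1 + E t)) * (-(-(2 * k) * E t))) / (1 - E t) ^ 2) t :=
      (((hEd t).const_add 1).const_mul a).div ((hEd t).const_sub 1) hne
    have heq : (α - 1) - (α + 1) * (a * (1 + E t) / (1 - E t)) ^ 2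
        = ((a * (-(2 * k) * E t)) * (1 - E t) - (a * (1 + E t)) * (-(-(2 * k) * E t))) / (1 - E t) ^ 2 := by
      rw [← hak, hk_def]
      field_simp
      ring
    show HasDerivAt (fun t => a * (1 + E t) / (1 - E t))
      ((α - 1) - (α + 1) * (a * (1 + E t) / (1 - E t)) ^ 2) t
    rw [heq]; exact hd
  · intro t ht
    have hne : 1 + E t ≠ 0 := ne_of_gt (by linarith [hE0 t])
    have ha0' : a ≠ 0 := ne_of_gt ha0
    have hd : HasDerivAt (fun t => (1 / a) * (1 - E t) / (1 + E t))
        ((((1 / a) * (-(-(2 * k) * E t))) * (1 + E t) - ((1 / a) * (1 - E t)) * (-(2 * k) * E t)) / (1 + E t) ^ 2) t :=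
      (((hEd t).const_sub 1).const_mul (1 / a)).div ((hEd t).const_add 1) hne
    have heq : (α + 1) - (α - 1) * ((1 / a) * (1 - E t) / (1 + E t)) ^ 2
        = (((1 / a) * (-(-(2 * k) * E t))) * (1 + E t) - ((1 / a) * (1 - E t)) * (-(2 * k) * E t)) / (1 + E t) ^ 2 := by
      rw [← hak, hk_def]
      field_simp
      ring
    show HasDerivAt (fun t => (1 / a) * (1 - E t) / (1 + E t))
      ((α + 1) - (α - 1) * ((1 / a) * (1 - E t) / (1 + E t)) ^ 2) t
    rw [heq]; exact hd
  · intro t ht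
    have h1 : 0 < 1 - E t := by linarith [hE1 t ht]
    have h2 : 0 < 1 + E t := by linarith [hE0 t]
    constructor
    · rw [le_div_iff₀ h1]
      nlinarith [hE0 t]
    · rw [div_le_one h1]
      have hEr' := hEr t ht
      rw [hr_def, le_div_iff₀ (show (0:ℝ) < 1 + a by linarith)] at hEr'
      nlinarith
  · intro t ht
    have h1 : 0 < 1 - E t := by linarith [hE1 t ht]
    have h2 : 0 < 1 + E t := by linarith [hE0 t]
    have hEr' := hEr t ht
    rw [hr_def, le_div_iff₀ (show (0:ℝ) < 1 + a by linarith)] at hEr'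
    constructor
    · rw [le_div_iff₀ h2, one_mul, one_div, inv_mul_eq_div, le_div_iff₀ ha0]
      nlinarith
    · rw [hb, div_le_div_iff₀ h2 ha0]
      have key : (1 / a) * (1 - E t) * a = 1 - E t := by field_simp
      rw [key]
      linarith [hE0 t]
  · have h : Tendsto (fun t => a * (1 + E t) / (1 - E t)) atTop (nhds (a * (1 + 0) / (1 - 0))) :=
      ((hElim.const_add 1).const_mul a).div (hElim.const_sub 1) (by norm_num)
    simpa using h
  · have h : Tendsto (fun t => (1 / a) * (1 - E t) / (1 + E t)) atTop (nhds ((1 / a) * (1 - 0) / (1 + 0))) :=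
      ((hElim.const_sub 1).const_mul (1 / a)).div (hElim.const_add 1) (by norm_num)
    rw [hb]
    simpa using h
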